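/- arXiv:2602.05448 — 3 statements merged into one kernel-verified Lean document; each statement's English description precedes it below -/
import Mathlib

section
/- Let G be a directed graph on n vertices with condensation ~G on n' vertices. For any SCC C of G, the following are equivalent: (i) C has known-relationship count n'-1 in ~G; (ii) every vertex u in C has known-relationship count n-1 in G; (iii) some vertex u in C has known-relationship count n-1 in G. -/
variable {V : Type*}

def SameSCC (E : V → V → Prop) (u v : V) : Prop :=
  Relation.ReflTransGen E u v ∧ Relation.ReflTransGen E v u

def IsSCC (E : V → V → Prop) (C : Set V) : Prop :=
  C.Nonempty ∧ ∀ u ∈ C, ∀ v, (v ∈ C ↔ SameSCC E u v)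

def CondEdge (E : V → V → Prop) (C D : Set V) : Prop :=
  IsSCC E C ∧ IsSCC E D ∧ C ≠ D ∧ ∃ x ∈ C, ∃ y ∈ D, E x y

/-- Known-relationship count of a vertex `u`. -/
noncomputable def kappa (E : V → V → Prop) (u : V) : ℕ :=
  {w | w ≠ u ∧ (Relation.TransGen E w u ∨ Relation.TransGen E u w)}.ncard

/-- Known-relationship count of an SCC `C` in the condensation graph. -/
noncomputable def kappaCond (E : V → V → Prop) (C : Set V) : ℕ :=
  {D : Set V | IsSCC E D ∧ D ≠ C ∧
    (Relation.TransGen (CondEdge E) D C ∨ Relation.TransGen (CondEdge E) C D)}.ncard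

open Relation Set

def scc (E : V → V → Prop) (v : V) : Set V := {w | SameSCC E v w}

lemma sameSCC_refl (E : V → V → Prop) (v : V) : SameSCC E v v :=
  ⟨.refl, .refl⟩

lemma sameSCC_symm {E : V → V → Prop} {u v : V} (h : SameSCC E u v) : SameSCC E v u :=
  ⟨h.2, h.1⟩

lemma sameSCC_trans {E : V → V → Prop} {u v w : V} (h : SameSCC E u v)
    (h' : SameSCC E v w) : SameSCC E u w :=
  ⟨h.1.trans h'.1, h'.2.trans h.2⟩

lemma mem_scc_self (E : V → V → Prop) (v : V) : v ∈ scc E v := sameSCC_refl E v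

lemma scc_isSCC (E : V → V → Prop) (v : V) : IsSCC E (scc E v) := by
  refine ⟨⟨v, mem_scc_self E v⟩, fun u hu w => ⟨fun hw => sameSCC_trans (sameSCC_symm hu) hw,
    fun h => sameSCC_trans hu h⟩⟩

lemma isSCC_eq_scc {E : V → V → Prop} {C : Set V} {v : V} (hC : IsSCC E C) (hv : v ∈ C) :
    C = scc E v := by
  ext w; exact hC.2 v hv w

lemma sccs_finite [Finite V] (E : V → V → Prop) : {D : Set V | IsSCC E D}.Finite := by
  apply (Set.finite_range (scc E)).subset
  rintro D hD
  obtain ⟨v, hv⟩ := hD.1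
  exact ⟨v, (isSCC_eq_scc hD hv).symm⟩

lemma reflTransGen_cond {E : V → V → Prop} {u w : V} (h : ReflTransGen E u w) :
    ReflTransGen (CondEdge E) (scc E u) (scc E w) := by
  induction h with
  | refl => exact .refl
  | @tail b c _ hbc ih =>
    by_cases hs : scc E b = scc E c
    · rw [← hs]; exact ih
    · exact ih.tail ⟨scc_isSCC E b, scc_isSCC E c, hs,
        b, mem_scc_self E b, c, mem_scc_self E c, hbc⟩

lemma cond_to_path {E : V → V → Prop} {C D : Set V} (h : TransGen (CondEdge E) C D)
    {u w : V} (hu : u ∈ C) (hw : w ∈ D) : ReflTransGen E u w := by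
  induction h generalizing w with
  | single h =>
    obtain ⟨hC, hD, _, x, hx, y, hy, hxy⟩ := h
    exact (((hC.2 u hu x).mp hx).1.tail hxy).trans ((hD.2 y hy w).mp hw).1
  | @tail D' D'' _ h ih =>
    obtain ⟨hD', hD'', _, x, hx, y, hy, hxy⟩ := h
    exact ((ih hx).tail hxy).trans ((hD''.2 y hy w).mp hw).1

/-- the condensation-level predicate -/
def CondResolved (E : V → V → Prop) (C : Set V) : Prop :=
  ∀ D, IsSCC E D → D ≠ C →
    TransGen (CondEdge E) D C ∨ TransGen (CondEdge E) C D

lemma key {E : V → V → Prop} {C : Set V} {u : V} (hC : IsSCC E C) (hu : u ∈ C) :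
    (∀ w, w ≠ u → (TransGen E w u ∨ TransGen E u w)) ↔ CondResolved E C := by
  have hCu : C = scc E u := isSCC_eq_scc hC hu
  constructor
  · intro hQ D hD hne
    obtain ⟨w, hw⟩ := hD.1
    have hDw : D = scc E w := isSCC_eq_scc hD hw
    have hwu : w ≠ u := by
      rintro rfl
      exact hne (hDw.trans hCu.symm)
    rcases hQ w hwu with h | h
    · left
      have := reflTransGen_cond h.to_reflTransGen
      rw [← hDw, ← hCu] at this
      rcases reflTransGen_iff_eq_or_transGen.mp this with rfl | h'
      · exact absurd rfl hne
      · exact h'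
    · right
      have := reflTransGen_cond h.to_reflTransGen
      rw [← hDw, ← hCu] at this
      rcases reflTransGen_iff_eq_or_transGen.mp this with heq | h'
      · exact absurd heq hne
      · exact h'
  · intro hP w hwu
    by_cases hwC : w ∈ C
    · have hs : SameSCC E u w := (hC.2 u hu w).mp hwC
      rcases reflTransGen_iff_eq_or_transGen.mp hs.2 with rfl | h'
      · exact absurd rfl hwu
      · exact Or.inl h'
    · have hDne : scc E w ≠ C := by
        intro h
        exact hwC (h ▸ mem_scc_self E w)
      rcases hP (scc E w) (scc_isSCC E w) hDne with h | h
      · left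
        have := cond_to_path h (mem_scc_self E w) hu
        rcases reflTransGen_iff_eq_or_transGen.mp this with rfl | h'
        · exact absurd rfl hwu
        · exact h'
      · right
        have := cond_to_path h hu (mem_scc_self E w)
        rcases reflTransGen_iff_eq_or_transGen.mp this with heq | h'
        · exact absurd heq hwu
        · exact h'

lemma kappa_eq_iff [Fintype V] (E : V → V → Prop) (u : V) :
    kappa E u = Fintype.card V - 1 ↔
      ∀ w, w ≠ u → (TransGen E w u ∨ TransGen E u w) := by
  have hT : (univ \ {u} : Set V).ncard = Fintype.card V - 1 := by
    rw [ncard_diff_singleton_of_mem (mem_univ u), ncard_univ, Nat.card_eq_fintype_card]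
  have hsub : {w | w ≠ u ∧ (TransGen E w u ∨ TransGen E u w)} ⊆ univ \ {u} := by
    rintro w ⟨hw, _⟩
    exact ⟨mem_univ w, hw⟩
  constructor
  · intro h w hw
    have : {w | w ≠ u ∧ (TransGen E w u ∨ TransGen E u w)} = univ \ {u} := by
      apply eq_of_subset_of_ncard_le hsub _ (toFinite _)
      rw [hT, ← h]; rfl
    have hmem : w ∈ univ \ {u} := ⟨mem_univ w, hw⟩
    rw [← this] at hmem
    exact hmem.2
  · intro h
    have : {w | w ≠ u ∧ (TransGen E w u ∨ TransGen E u w)} = univ \ {u} := by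
      ext w
      exact ⟨fun hw => ⟨mem_univ w, hw.1⟩, fun hw => ⟨hw.2, h w hw.2⟩⟩
    rw [kappa, this, hT]

lemma kappaCond_eq_iff [Fintype V] (E : V → V → Prop) {C : Set V} (hC : IsSCC E C) :
    kappaCond E C = {D : Set V | IsSCC E D}.ncard - 1 ↔ CondResolved E C := by
  have hfin : {D : Set V | IsSCC E D}.Finite := sccs_finite E
  have hT : ({D : Set V | IsSCC E D} \ {C}).ncard = {D : Set V | IsSCC E D}.ncard - 1 :=
    ncard_diff_singleton_of_mem (s := {D : Set V | IsSCC E D}) hC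
  have hsub : {D : Set V | IsSCC E D ∧ D ≠ C ∧
      (TransGen (CondEdge E) D C ∨ TransGen (CondEdge E) C D)} ⊆
      {D : Set V | IsSCC E D} \ {C} := by
    rintro D ⟨h1, h2, _⟩
    exact ⟨h1, h2⟩
  constructor
  · intro h D hD hne
    have heq : {D : Set V | IsSCC E D ∧ D ≠ C ∧
        (TransGen (CondEdge E) D C ∨ TransGen (CondEdge E) C D)} =
        {D : Set V | IsSCC E D} \ {C} := by
      apply eq_of_subset_of_ncard_le hsub _ (hfin.diff)
      rw [hT, ← h]; rfl
    have hmem : D ∈ {D : Set V | IsSCC E D} \ {C} := ⟨hD, hne⟩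
    rw [← heq] at hmem
    exact hmem.2.2
  · intro h
    have heq : {D : Set V | IsSCC E D ∧ D ≠ C ∧
        (TransGen (CondEdge E) D C ∨ TransGen (CondEdge E) C D)} =
        {D : Set V | IsSCC E D} \ {C} := by
      ext D
      exact ⟨fun hD => ⟨hD.1, hD.2.1⟩, fun hD => ⟨hD.1, hD.2, h D hD.1 hD.2⟩⟩
    rw [kappaCond, heq, hT]

theorem stmt_8 [Fintype V] (E : V → V → Prop) (C : Set V) (hC : IsSCC E C) :
    (kappaCond E C = {D : Set V | IsSCC E D}.ncard - 1 ↔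
        ∀ u ∈ C, kappa E u = Fintype.card V - 1) ∧
    (kappaCond E C = {D : Set V | IsSCC E D}.ncard - 1 ↔
        ∃ u ∈ C, kappa E u = Fintype.card V - 1) := by
  rw [kappaCond_eq_iff E hC]
  obtain ⟨v, hv⟩ := hC.1
  constructor
  · constructor
    · intro h u hu
      rw [kappa_eq_iff, key hC hu]
      exact h
    · intro h
      rw [← key hC hv, ← kappa_eq_iff]
      exact h v hv
  · constructor
    · intro h
      refine ⟨v, hv, ?_⟩
      rw [kappa_eq_iff, key hC hv]
      exact h
    · rintro ⟨u, hu, h⟩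
      rw [← key hC hu, ← kappa_eq_iff]
      exact h
end

section
/- Let G* be a transitive tournament on n vertices and G' a subgraph of G* on the same vertex set. Suppose for some j ∈ [n-1] the sorted in-reach sizes of G' satisfy r^(1) < r^(2) < ... < r^(j) < r^(j+1). Then r^(i) = i - 1 for all i ≤ j, and the first j vertices in the in-reach ordering of G' coincide (in order) with the first j vertices of the in-degree ordering of G*. -/
variable {V : Type*}

def inreach (E : V → V → Prop) (v : V) : Set V :=
  {u | u ≠ v ∧ Relation.TransGen E u v}

def IsTournament (E : V → V → Prop) : Prop :=
  (∀ v, ¬ E v v) ∧ ∀ u v : V, u ≠ v → (E u v ↔ ¬ E v u)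

noncomputable def indeg (E : V → V → Prop) (v : V) : ℕ :=
  {w | E w v}.ncard

theorem stmt_14 [Fintype V] (E E' : V → V → Prop) (hT : IsTournament E)
    (htrans : ∀ u v w : V, E u v → E v w → E u w)
    (hsub : ∀ a b : V, E' a b → E a b)
    (v' : Fin (Fintype.card V) → V) (hbij : Function.Bijective v')
    (hmono : Monotone fun i => (inreach E' (v' i)).ncard)
    (vstar : Fin (Fintype.card V) → V) (hstarbij : Function.Bijective vstar)
    (hstar : ∀ i : Fin (Fintype.card V), indeg E (vstar i) = (i : ℕ))
    (j : ℕ) (hj1 : 1 ≤ j) (hjn : j ≤ Fintype.card V - 1)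
    (hstrict : ∀ i i' : Fin (Fintype.card V), i < i' → (i' : ℕ) ≤ j →
      (inreach E' (v' i)).ncard < (inreach E' (v' i')).ncard) :
    ∀ i : Fin (Fintype.card V), (i : ℕ) < j →
      (inreach E' (v' i)).ncard = (i : ℕ) ∧ v' i = vstar i := by
  have htr : Transitive E := fun {a b c} hab hbc => htrans a b c hab hbc
  have hle : ∀ v : V, (inreach E' v).ncard ≤ indeg E v := by
    intro v
    apply Set.ncard_le_ncard _ (Set.toFinite _)
    intro u hu
    have h2 : Relation.TransGen E u v := Relation.TransGen.mono hsub _ _ hu.2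
    rwa [@Relation.transGen_eq_self _ _ ⟨htrans⟩] at h2
  have hlow : ∀ m : ℕ, ∀ i : Fin (Fintype.card V), (i : ℕ) = m → m ≤ j →
      m ≤ (inreach E' (v' i)).ncard := by
    intro m
    induction m with
    | zero => intro i _ _; exact Nat.zero_le _
    | succ k ih =>
      intro i hi hkj
      have hiLt := i.isLt
      have hk : k < Fintype.card V := by omega
      have h1 := ih ⟨k, hk⟩ rfl (by omega)
      have h2 := hstrict ⟨k, hk⟩ i (by rw [Fin.lt_def]; simp; omega) (by omega)
      omega
  suffices H : ∀ m : ℕ, ∀ i : Fin (Fintype.card V), (i : ℕ) = m → (i : ℕ) < j →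
      (inreach E' (v' i)).ncard = (i : ℕ) ∧ v' i = vstar i by
    exact fun i hij => H i i rfl hij
  intro m
  induction m using Nat.strong_induction_on with
  | _ m ih =>
  intro i him hij
  obtain ⟨p, hp⟩ := hbij.2 (vstar i)
  have hrp : (inreach E' (v' p)).ncard ≤ (i : ℕ) := by
    rw [hp]
    calc (inreach E' (vstar i)).ncard ≤ indeg E (vstar i) := hle _
    _ = (i : ℕ) := hstar i
  have hpi : i ≤ p := by
    by_contra h
    push_neg at h
    have hplt : (p : ℕ) < (i : ℕ) := Fin.lt_def.mp h
    have h2 := (ih p (by omega) p rfl (by omega)).2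
    have h3 : vstar p = vstar i := h2 ▸ hp
    have h4 : p = i := hstarbij.1 h3
    omega
  have hple : p ≤ i := by
    by_contra h
    push_neg at h
    have hilt : (i : ℕ) < (p : ℕ) := Fin.lt_def.mp h
    have hiLt := i.isLt
    have hi1 : (i : ℕ) + 1 < Fintype.card V := by omega
    have h1 := hlow ((i : ℕ) + 1) ⟨(i : ℕ) + 1, hi1⟩ rfl (by omega)
    have h2 : (inreach E' (v' ⟨(i : ℕ) + 1, hi1⟩)).ncard ≤ (inreach E' (v' p)).ncard :=
      hmono (by rw [Fin.le_def]; simpa using hilt)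
    omega
  have hpe : p = i := le_antisymm hple hpi
  subst hpe
  exact ⟨le_antisymm hrp (hlow _ p rfl (le_of_lt hij)), hp⟩
end

section
/- Let G* be a tournament and G a subgraph of G* on the same vertex set, and let u, v be distinct vertices. If u is resolved in G (its known-relationship count is n-1) and v is not in the in-reach of u in G, then the in-reach size of u in G* is at most the in-reach size of v in G*. -/
variable {V : Type*}

theorem stmt_18 [Fintype V] (Estar E : V → V → Prop) (hT : IsTournament Estar)
    (hsub : ∀ a b : V, E a b → Estar a b)
    (u v : V) (hne : u ≠ v)
    (hres : kappa E u = Fintype.card V - 1)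
    (hnin : v ∉ inreach E u) :
    (inreach Estar u).ncard ≤ (inreach Estar v).ncard := by
  classical
  have hcard : (Set.univ \ {u} : Set V).ncard = Fintype.card V - 1 := by
    rw [Set.ncard_diff_singleton_of_mem (Set.mem_univ u), Set.ncard_univ,
      Nat.card_eq_fintype_card]
  have hS : {w | w ≠ u ∧ (Relation.TransGen E w u ∨ Relation.TransGen E u w)}
      = Set.univ \ {u} := by
    apply Set.eq_of_subset_of_ncard_le
    · intro w hw; exact ⟨Set.mem_univ w, hw.1⟩
    · rw [hcard, ← hres]; rfl
    · exact Set.toFinite _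
  have hvS : v ∈ {w | w ≠ u ∧ (Relation.TransGen E w u ∨ Relation.TransGen E u w)} := by
    rw [hS]; exact ⟨Set.mem_univ v, fun h => hne (Set.mem_singleton_iff.mp h).symm⟩
  have huv : Relation.TransGen E u v := by
    rcases hvS.2 with h | h
    · exact absurd ⟨hne.symm, h⟩ hnin
    · exact h
  have huvstar : Relation.TransGen Estar u v := Relation.TransGen.mono hsub u v huv
  have huB : u ∈ inreach Estar v := ⟨hne, huvstar⟩
  have hsub1 : inreach Estar u \ {v} ⊆ inreach Estar v \ {u} := by
    rintro w ⟨⟨hwu, hw⟩, hwv⟩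
    exact ⟨⟨fun h => hwv (Set.mem_singleton_iff.mpr h), hw.trans huvstar⟩,
      fun h => hwu (Set.mem_singleton_iff.mp h)⟩
  have h1 : (inreach Estar u).ncard ≤ (inreach Estar u \ {v}).ncard + 1 := by
    calc (inreach Estar u).ncard ≤ (insert v (inreach Estar u \ {v})).ncard := by
          apply Set.ncard_le_ncard _ (Set.toFinite _)
          intro w hw
          by_cases h : w = v
          · exact Set.mem_insert_iff.mpr (Or.inl h)
          · exact Set.mem_insert_iff.mpr (Or.inr ⟨hw, h⟩)
      _ ≤ (inreach Estar u \ {v}).ncard + 1 := Set.ncard_insert_le _ _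
  have h2 : (inreach Estar u \ {v}).ncard ≤ (inreach Estar v \ {u}).ncard :=
    Set.ncard_le_ncard hsub1 (Set.toFinite _)
  have h3 : (inreach Estar v \ {u}).ncard + 1 = (inreach Estar v).ncard := by
    rw [Set.ncard_diff_singleton_of_mem huB]
    have : 1 ≤ (inreach Estar v).ncard :=
      Set.ncard_pos (Set.toFinite _) |>.mpr ⟨u, huB⟩
    omega
  omega
end
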